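/- Let I be the monomial ideal I = (x^d, x^{d-1}y, xy^{d-1}, y^d, x^2 y^{d-2} z) in K[x,y,z] with d ≥ 5. Then for n < d-2, the maximal ideal (x,y,z) is an associated prime of I^{n-1}/I^n (equivalently I^n : (x,y,z)^∞ ≠ I^n). -/

import Mathlib

open MvPolynomial Pointwise

section Aux
variable {K : Type*} [Field K] (m t : ℕ)

/-- exponent vectors of the five generators, with `d = m+t+4` -/
noncomputable def stmtGamma (m t : ℕ) : Fin 5 → (Fin 3 →₀ ℕ) := fun i =>
  match i with
  | 0 => Finsupp.single 0 (m+t+4)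
  | 1 => Finsupp.single 0 (m+t+3) + Finsupp.single 1 1
  | 2 => Finsupp.single 0 1 + Finsupp.single 1 (m+t+3)
  | 3 => Finsupp.single 1 (m+t+4)
  | 4 => Finsupp.single 0 2 + Finsupp.single 1 (m+t+2) + Finsupp.single 2 1

lemma stmt_gens_eq :
    ({X 0 ^ (m+t+4), X 0 ^ (m+t+3) * X 1, X 0 * X 1 ^ (m+t+3), X 1 ^ (m+t+4),
        X 0 ^ 2 * X 1 ^ (m+t+2) * X 2} : Set (MvPolynomial (Fin 3) K)) =
      (fun s => monomial s (1 : K)) ''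
        {stmtGamma m t 0, stmtGamma m t 1, stmtGamma m t 2, stmtGamma m t 3, stmtGamma m t 4} := by
  rw [Set.image_insert_eq, Set.image_insert_eq, Set.image_insert_eq, Set.image_insert_eq,
    Set.image_singleton]
  have h0 : (X 0 : MvPolynomial (Fin 3) K) ^ (m+t+4) = monomial (stmtGamma m t 0) 1 := by
    rw [X_pow_eq_monomial]; rfl
  have h1 : (X 0 : MvPolynomial (Fin 3) K) ^ (m+t+3) * X 1 = monomial (stmtGamma m t 1) 1 := by
    rw [show (X 1 : MvPolynomial (Fin 3) K) = X 1 ^ 1 from (pow_one _).symm,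
      X_pow_eq_monomial, X_pow_eq_monomial, monomial_mul, one_mul]; rfl
  have h2 : (X 0 : MvPolynomial (Fin 3) K) * X 1 ^ (m+t+3) = monomial (stmtGamma m t 2) 1 := by
    rw [show (X 0 : MvPolynomial (Fin 3) K) = X 0 ^ 1 from (pow_one _).symm,
      X_pow_eq_monomial, X_pow_eq_monomial, monomial_mul, one_mul]; rfl
  have h3 : (X 1 : MvPolynomial (Fin 3) K) ^ (m+t+4) = monomial (stmtGamma m t 3) 1 := by
    rw [X_pow_eq_monomial]; rfl
  have h4 : (X 0 : MvPolynomial (Fin 3) K) ^ 2 * X 1 ^ (m+t+2) * X 2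
      = monomial (stmtGamma m t 4) 1 := by
    rw [show (X 2 : MvPolynomial (Fin 3) K) = X 2 ^ 1 from (pow_one _).symm,
      X_pow_eq_monomial, X_pow_eq_monomial, X_pow_eq_monomial, monomial_mul, monomial_mul,
      one_mul, one_mul]; rfl
  rw [h0, h1, h2, h3, h4]

end Aux

section Aux2
variable {K : Type*} [Field K]

/-- exponent vectors of (candidate) generators of `I^n` -/
def stmtT (m t n : ℕ) : Set (Fin 3 →₀ ℕ) :=
  {τ | ∃ k0 k1 k2 k3 k4 : ℕ, k0 + k1 + k2 + k3 + k4 = n ∧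
    τ = k0 • stmtGamma m t 0 + k1 • stmtGamma m t 1 + k2 • stmtGamma m t 2 +
      k3 • stmtGamma m t 3 + k4 • stmtGamma m t 4}

lemma stmt_pow_le (m t : ℕ) : ∀ n : ℕ,
    (Ideal.span ((fun s => monomial s (1 : K)) ''
        {stmtGamma m t 0, stmtGamma m t 1, stmtGamma m t 2, stmtGamma m t 3,
          stmtGamma m t 4})) ^ n ≤
      Ideal.span ((fun s => monomial s (1 : K)) '' stmtT m t n) := by
  intro n
  induction n with
  | zero =>
    rw [pow_zero, Ideal.one_eq_top]
    have h1 : (1 : MvPolynomial (Fin 3) K) ∈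
        (fun s => monomial s (1 : K)) '' stmtT m t 0 :=
      ⟨0, ⟨0, 0, 0, 0, 0, rfl, by simp⟩, by simp [monomial_zero']⟩
    exact top_le_iff.2 ((Ideal.eq_top_iff_one _).2 (Ideal.subset_span h1))
  | succ n ih =>
    rw [pow_succ]
    calc _ ≤ Ideal.span ((fun s => monomial s (1 : K)) '' stmtT m t n) *
          Ideal.span ((fun s => monomial s (1 : K)) ''
            {stmtGamma m t 0, stmtGamma m t 1, stmtGamma m t 2, stmtGamma m t 3,
              stmtGamma m t 4}) := Ideal.mul_mono_left ih
      _ = Ideal.span (((fun s => monomial s (1 : K)) '' stmtT m t n) *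
            ((fun s => monomial s (1 : K)) ''
              {stmtGamma m t 0, stmtGamma m t 1, stmtGamma m t 2, stmtGamma m t 3,
                stmtGamma m t 4})) := (Ideal.span_mul_span' _ _)
      _ ≤ _ := by
        refine Ideal.span_mono ?_
        rintro p hp
        rw [Set.mem_mul] at hp
        obtain ⟨a, ⟨τ, hτ, rfl⟩, b, ⟨γ, hγ, rfl⟩, rfl⟩ := hp
        refine ⟨τ + γ, ?_, by rw [monomial_mul, one_mul]⟩
        obtain ⟨k0, k1, k2, k3, k4, hsum, rfl⟩ := hτ
        simp only [Set.mem_insert_iff, Set.mem_singleton_iff] at hγ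
        rcases hγ with rfl | rfl | rfl | rfl | rfl
        · exact ⟨k0 + 1, k1, k2, k3, k4, by omega, by rw [succ_nsmul]; abel⟩
        · exact ⟨k0, k1 + 1, k2, k3, k4, by omega, by rw [succ_nsmul]; abel⟩
        · exact ⟨k0, k1, k2 + 1, k3, k4, by omega, by rw [succ_nsmul]; abel⟩
        · exact ⟨k0, k1, k2, k3 + 1, k4, by omega, by rw [succ_nsmul]; abel⟩
        · exact ⟨k0, k1, k2, k3, k4 + 1, by omega, by rw [succ_nsmul]; abel⟩

end Aux2

section Aux3
variable {K : Type*} [Field K]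

lemma stmt_w_notmem (m t : ℕ) :
    (X 0 : MvPolynomial (Fin 3) K) ^ (m+t+2) * X 1 ^ (m*(m+t+3)+m+t+2) ∉
      Ideal.span ((fun s => monomial s (1 : K)) '' stmtT m t (m+1)) := by
  classical
  intro h
  have hw : (X 0 : MvPolynomial (Fin 3) K) ^ (m+t+2) * X 1 ^ (m*(m+t+3)+m+t+2)
      = monomial (Finsupp.single 0 (m+t+2) + Finsupp.single 1 (m*(m+t+3)+m+t+2)) 1 := by
    rw [X_pow_eq_monomial, X_pow_eq_monomial, monomial_mul, one_mul]
  rw [hw, mem_ideal_span_monomial_image] at h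
  have hsupp := h (Finsupp.single 0 (m+t+2) + Finsupp.single 1 (m*(m+t+3)+m+t+2))
    (by rw [support_monomial, if_neg one_ne_zero]; exact Finset.mem_singleton_self _)
  obtain ⟨τ, ⟨k0, k1, k2, k3, k4, hsum, rfl⟩, hle⟩ := hsupp
  have h0 := Finsupp.le_def.mp hle 0
  have h1 := Finsupp.le_def.mp hle 1
  have h2 := Finsupp.le_def.mp hle 2
  simp only [stmtGamma, Finsupp.coe_add, Finsupp.coe_smul, Pi.add_apply, Pi.smul_apply,
    Finsupp.single_apply, smul_eq_mul] at h0 h1 h2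
  have e1 : ((2:Fin 3) = 0) = False := by decide
  have e2 : ((2:Fin 3) = 1) = False := by decide
  have e3 : ((0:Fin 3) = 2) = False := by decide
  have e4 : ((1:Fin 3) = 2) = False := by decide
  have e5 : ((1:Fin 3) = 0) = False := by decide
  have e6 : ((0:Fin 3) = 1) = False := by decide
  simp only [e1, e2, e3, e4, e5, e6, if_false, if_true, add_zero, zero_add, mul_zero,
    mul_one] at h0 h1 h2
  -- now: h0 : k0*(m+t+4) + k1*(m+t+3) + k2*1 + k4*2 ≤ m+t+2,
  -- h1 : k1*1 + k2*(m+t+3) + k3*(m+t+4) + k4*(m+t+2) ≤ m*(m+t+3)+m+t+2, h2 : k4 ≤ 0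
  have hk4 : k4 = 0 := by omega
  subst hk4
  have hk0 : k0 = 0 := by
    rcases Nat.eq_zero_or_pos k0 with h' | h'
    · exact h'
    · have := Nat.le_mul_of_pos_left (m+t+4) h'
      nlinarith
  subst hk0
  have hk1 : k1 = 0 := by
    rcases Nat.eq_zero_or_pos k1 with h' | h'
    · exact h'
    · have := Nat.le_mul_of_pos_left (m+t+3) h'
      nlinarith
  subst hk1
  have hd : k2 + k3 = m + 1 := by omega
  have he : k2 * (m+t+3) + k3 * (m+t+4) = (k2 + k3) * (m+t+3) + k3 := by ring
  rw [hd] at he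
  nlinarith

end Aux3

section Aux4
variable {K : Type*} [Field K]

lemma stmt_max : (Ideal.span {(X 0 : MvPolynomial (Fin 3) K), X 1, X 2}).IsMaximal := by
  have hker : RingHom.ker (eval (0 : Fin 3 → K)) =
      Ideal.span {(X 0 : MvPolynomial (Fin 3) K), X 1, X 2} := by
    apply le_antisymm
    · intro p hp
      rw [RingHom.mem_ker, eval_zero] at hp
      have himg : ({(X 0 : MvPolynomial (Fin 3) K), X 1, X 2} : Set _)
          = MvPolynomial.X '' Set.univ := by
        ext q
        simp only [Set.image_univ, Set.mem_range, Set.mem_insert_iff, Set.mem_singleton_iff]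
        constructor
        · rintro (rfl | rfl | rfl)
          exacts [⟨0, rfl⟩, ⟨1, rfl⟩, ⟨2, rfl⟩]
        · rintro ⟨i, rfl⟩
          fin_cases i <;> simp
      rw [himg, mem_ideal_span_X_image]
      intro mm hmm
      have hne : mm ≠ 0 := by
        rintro rfl
        exact (MvPolynomial.mem_support_iff.mp hmm) (by rw [← constantCoeff_eq]; exact hp)
      obtain ⟨i, hi⟩ := Finsupp.ne_iff.mp hne
      exact ⟨i, Set.mem_univ i, by simpa using hi⟩
    · rw [Ideal.span_le]
      rintro q hq
      simp only [Set.mem_insert_iff, Set.mem_singleton_iff] at hq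
      rcases hq with rfl | rfl | rfl <;> simp [RingHom.mem_ker]
  rw [← hker]
  exact RingHom.ker_isMaximal_of_surjective _ (fun k => ⟨C k, eval_C _⟩)

end Aux4

section Main
variable {K : Type*} [Field K]

set_option maxHeartbeats 1000000 in
theorem stmt_main (m t : ℕ) :
    (Ideal.span {(X 0 : MvPolynomial (Fin 3) K), X 1, X 2} ∈
      associatedPrimes (MvPolynomial (Fin 3) K)
        ((↥((Ideal.span {(X 0 : MvPolynomial (Fin 3) K) ^ (m+t+4),
              X 0 ^ (m+t+3) * X 1, X 0 * X 1 ^ (m+t+3), X 1 ^ (m+t+4),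
              X 0 ^ 2 * X 1 ^ (m+t+2) * X 2}) ^ m)) ⧸
          Submodule.comap
            ((Ideal.span {(X 0 : MvPolynomial (Fin 3) K) ^ (m+t+4),
                X 0 ^ (m+t+3) * X 1, X 0 * X 1 ^ (m+t+3), X 1 ^ (m+t+4),
                X 0 ^ 2 * X 1 ^ (m+t+2) * X 2}) ^ m).subtype
            ((Ideal.span {(X 0 : MvPolynomial (Fin 3) K) ^ (m+t+4),
                X 0 ^ (m+t+3) * X 1, X 0 * X 1 ^ (m+t+3), X 1 ^ (m+t+4),
                X 0 ^ 2 * X 1 ^ (m+t+2) * X 2}) ^ (m+1)))) ∧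
    (⨆ k : ℕ,
        Submodule.colon
          ((Ideal.span {(X 0 : MvPolynomial (Fin 3) K) ^ (m+t+4),
              X 0 ^ (m+t+3) * X 1, X 0 * X 1 ^ (m+t+3), X 1 ^ (m+t+4),
              X 0 ^ 2 * X 1 ^ (m+t+2) * X 2}) ^ (m+1))
          (((Ideal.span {(X 0 : MvPolynomial (Fin 3) K), X 1, X 2}) ^ k :
            Ideal (MvPolynomial (Fin 3) K)) : Set (MvPolynomial (Fin 3) K))) ≠
      (Ideal.span {(X 0 : MvPolynomial (Fin 3) K) ^ (m+t+4),
          X 0 ^ (m+t+3) * X 1, X 0 * X 1 ^ (m+t+3), X 1 ^ (m+t+4),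
          X 0 ^ 2 * X 1 ^ (m+t+2) * X 2}) ^ (m+1) := by
  set I : Ideal (MvPolynomial (Fin 3) K) :=
    Ideal.span {(X 0 : MvPolynomial (Fin 3) K) ^ (m+t+4),
      X 0 ^ (m+t+3) * X 1, X 0 * X 1 ^ (m+t+3), X 1 ^ (m+t+4),
      X 0 ^ 2 * X 1 ^ (m+t+2) * X 2} with hIdef
  set w : MvPolynomial (Fin 3) K := X 0 ^ (m+t+2) * X 1 ^ (m*(m+t+3)+m+t+2) with hwdef
  -- generators of I
  have hb : (X 0 : MvPolynomial (Fin 3) K) ^ (m+t+3) * X 1 ∈ I := Ideal.subset_span (by simp)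
  have hc : (X 0 : MvPolynomial (Fin 3) K) * X 1 ^ (m+t+3) ∈ I := Ideal.subset_span (by simp)
  have he : (X 1 : MvPolynomial (Fin 3) K) ^ (m+t+4) ∈ I := Ideal.subset_span (by simp)
  have hf : (X 0 : MvPolynomial (Fin 3) K) ^ 2 * X 1 ^ (m+t+2) * X 2 ∈ I :=
    Ideal.subset_span (by simp)
  -- w ∈ I ^ m
  have hwIm : w ∈ I ^ m := by
    have : w = (X 0 * X 1 ^ (m+t+3)) ^ m * (X 0 ^ (t+2) * X 1 ^ (m+t+2)) := by
      have h : (m+t+3)*m = m*(m+t+3) := by ring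
      rw [mul_pow, ← pow_mul, h]
      ring
    rw [this]
    exact Ideal.mul_mem_right _ _ (Ideal.pow_mem_pow hc m)
  -- X 0 * w ∈ I ^ (m+1)
  have hxw : X 0 * w ∈ I ^ (m+1) := by
    have : X 0 * w = (X 0 ^ (m+t+3) * X 1) * (X 1 ^ (m+t+4)) ^ m * X 1 ^ (t+1) := by
      rw [← pow_mul]
      have h : (m+t+4)*m = m*(m+t+3)+m := by ring
      rw [h]
      ring
    rw [this, pow_succ']
    exact Ideal.mul_mem_right _ _ (Ideal.mul_mem_mul hb (Ideal.pow_mem_pow he m))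
  -- X 1 * w ∈ I ^ (m+1)
  have hyw : X 1 * w ∈ I ^ (m+1) := by
    have : X 1 * w = (X 0 * X 1 ^ (m+t+3)) ^ (m+1) * X 0 ^ (t+1) := by
      have h : (m+t+3)*(m+1) = m*(m+t+3)+m+t+2+1 := by ring
      rw [mul_pow, ← pow_mul, h, pow_succ, pow_succ]
      ring
    rw [this]
    exact Ideal.mul_mem_right _ _ (Ideal.pow_mem_pow hc (m+1))
  -- X 2 * w ∈ I ^ (m+1)
  have hzw : X 2 * w ∈ I ^ (m+1) := by
    have : X 2 * w = (X 0 ^ 2 * X 1 ^ (m+t+2) * X 2) * (X 0 * X 1 ^ (m+t+3)) ^ m * X 0 ^ t := by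
      have h : (m+t+3)*m = m*(m+t+3) := by ring
      rw [mul_pow, ← pow_mul, h]
      ring
    rw [this, pow_succ']
    exact Ideal.mul_mem_right _ _ (Ideal.mul_mem_mul hf (Ideal.pow_mem_pow hc m))
  -- w ∉ I ^ (m+1)
  have hnot : w ∉ I ^ (m+1) := by
    intro hmem
    apply stmt_w_notmem m t (K := K)
    apply stmt_pow_le m t (m+1)
    rwa [hIdef, stmt_gens_eq] at hmem
  -- the quotient module and the class of w
  have hmax : (Ideal.span {(X 0 : MvPolynomial (Fin 3) K), X 1, X 2}).IsMaximal := stmt_max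
  constructor
  · refine ⟨hmax.isPrime, Submodule.Quotient.mk ⟨w, hwIm⟩, ?_⟩
    set x := (Submodule.Quotient.mk (⟨w, hwIm⟩ : ↥(I ^ m)) :
      (↥(I ^ m)) ⧸ Submodule.comap (I ^ m).subtype (I ^ (m+1)))
    have hxr : ∀ r : MvPolynomial (Fin 3) K, r • x = 0 ↔ r * w ∈ I ^ (m+1) := by
      intro r
      rw [← Submodule.Quotient.mk_smul, Submodule.Quotient.mk_eq_zero, Submodule.mem_comap]
      simp [smul_eq_mul]
    have hle : Ideal.span {(X 0 : MvPolynomial (Fin 3) K), X 1, X 2} ≤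
        (Submodule.span (MvPolynomial (Fin 3) K) {x}).annihilator := by
      rw [Ideal.span_le]
      rintro q hq
      simp only [Set.mem_insert_iff, Set.mem_singleton_iff] at hq
      rw [SetLike.mem_coe, Submodule.mem_annihilator_span_singleton]
      rcases hq with rfl | rfl | rfl
      · exact (hxr _).mpr hxw
      · exact (hxr _).mpr hyw
      · exact (hxr _).mpr hzw
    have hne : (Submodule.span (MvPolynomial (Fin 3) K) {x}).annihilator ≠ ⊤ := by
      intro htop
      have h1 : (1 : MvPolynomial (Fin 3) K) ∈
          (Submodule.span (MvPolynomial (Fin 3) K) {x}).annihilator := htop ▸ trivial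
      rw [Submodule.mem_annihilator_span_singleton, hxr, one_mul] at h1
      exact hnot h1
    have hcol : (⊥ : Submodule (MvPolynomial (Fin 3) K) _).colon {x} =
        (Submodule.span (MvPolynomial (Fin 3) K) {x}).annihilator := by
      ext r
      rw [Submodule.mem_colon_singleton, Submodule.mem_annihilator_span_singleton, Submodule.mem_bot]
    exact hmax.eq_of_le (by rw [hcol, Ne, Ideal.radical_eq_top]; exact hne)
      (hle.trans (by rw [hcol]; exact Ideal.le_radical))
  · intro heq
    have hwcolon : w ∈ Submodule.colon (I ^ (m+1))
        (((Ideal.span {(X 0 : MvPolynomial (Fin 3) K), X 1, X 2}) ^ 1 :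
          Ideal (MvPolynomial (Fin 3) K)) : Set (MvPolynomial (Fin 3) K)) := by
      rw [pow_one, Submodule.mem_colon]
      intro p hp
      rw [SetLike.mem_coe] at hp
      induction hp using Submodule.span_induction with
      | mem q hq =>
        simp only [Set.mem_insert_iff, Set.mem_singleton_iff] at hq
        rcases hq with rfl | rfl | rfl
        · rw [smul_eq_mul, mul_comm]; exact hxw
        · rw [smul_eq_mul, mul_comm]; exact hyw
        · rw [smul_eq_mul, mul_comm]; exact hzw
      | zero => simp
      | add a b _ _ ha hb => rw [smul_add]; exact Submodule.add_mem _ ha hb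
      | smul r a _ ha => rw [smul_comm]; exact Submodule.smul_mem _ _ ha
    have hwle : w ∈ ⨆ k : ℕ, Submodule.colon (I ^ (m+1))
        (((Ideal.span {(X 0 : MvPolynomial (Fin 3) K), X 1, X 2}) ^ k :
          Ideal (MvPolynomial (Fin 3) K)) : Set (MvPolynomial (Fin 3) K)) :=
      (le_iSup (fun k => Submodule.colon (I ^ (m+1))
        (((Ideal.span {(X 0 : MvPolynomial (Fin 3) K), X 1, X 2}) ^ k :
          Ideal (MvPolynomial (Fin 3) K)) : Set (MvPolynomial (Fin 3) K))) 1) hwcolon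
    rw [heq] at hwle
    exact hnot hwle

end Main

/-- For `d ≥ 5` and `I = (x^d, x^{d-1}y, xy^{d-1}, y^d, x²y^{d-2}z)` in `K[x,y,z]`,
for `1 ≤ n < d-2` the maximal ideal `(x,y,z)` is an associated prime of
`I^{n-1}/I^n`; equivalently `I^n : (x,y,z)^∞ ≠ I^n`. -/
theorem stmt_14 {K : Type*} [Field K] (d : ℕ) (hd : 5 ≤ d)
    (n : ℕ) (hn1 : 1 ≤ n) (hn : n < d - 2) :
    (Ideal.span {(X 0 : MvPolynomial (Fin 3) K), X 1, X 2} ∈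
      associatedPrimes (MvPolynomial (Fin 3) K)
        ((↥((Ideal.span {(X 0 : MvPolynomial (Fin 3) K) ^ d,
              X 0 ^ (d - 1) * X 1, X 0 * X 1 ^ (d - 1), X 1 ^ d,
              X 0 ^ 2 * X 1 ^ (d - 2) * X 2}) ^ (n - 1))) ⧸
          Submodule.comap
            ((Ideal.span {(X 0 : MvPolynomial (Fin 3) K) ^ d,
                X 0 ^ (d - 1) * X 1, X 0 * X 1 ^ (d - 1), X 1 ^ d,
                X 0 ^ 2 * X 1 ^ (d - 2) * X 2}) ^ (n - 1)).subtype
            ((Ideal.span {(X 0 : MvPolynomial (Fin 3) K) ^ d,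
                X 0 ^ (d - 1) * X 1, X 0 * X 1 ^ (d - 1), X 1 ^ d,
                X 0 ^ 2 * X 1 ^ (d - 2) * X 2}) ^ n))) ∧
    (⨆ k : ℕ,
        Submodule.colon
          ((Ideal.span {(X 0 : MvPolynomial (Fin 3) K) ^ d,
              X 0 ^ (d - 1) * X 1, X 0 * X 1 ^ (d - 1), X 1 ^ d,
              X 0 ^ 2 * X 1 ^ (d - 2) * X 2}) ^ n)
          (((Ideal.span {(X 0 : MvPolynomial (Fin 3) K), X 1, X 2}) ^ k :
            Ideal (MvPolynomial (Fin 3) K)) : Set (MvPolynomial (Fin 3) K))) ≠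
      (Ideal.span {(X 0 : MvPolynomial (Fin 3) K) ^ d,
          X 0 ^ (d - 1) * X 1, X 0 * X 1 ^ (d - 1), X 1 ^ d,
          X 0 ^ 2 * X 1 ^ (d - 2) * X 2}) ^ n := by
  obtain ⟨m, rfl⟩ : ∃ m, n = m + 1 := ⟨n - 1, by omega⟩
  obtain ⟨t, rfl⟩ : ∃ t, d = m + t + 4 := ⟨d - m - 4, by omega⟩
  have r1 : m + t + 4 - 1 = m + t + 3 := by omega
  have r2 : m + t + 4 - 2 = m + t + 2 := by omega
  have r3 : m + 1 - 1 = m := by omega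
  rw [r1, r2, r3]
  exact stmt_main (K := K) m t
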